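/- Let S and T be finsets of ι and let v ∈ ι with v ∉ S and v ∉ T. Then m_S * F_{T ∪ {v}} = m_S * F_T + m_{S ∪ {v}} * F_T + m_{S ∪ {v}} in R (Case 2 of the shortening/expanding rule for power term polynomials). -/
import Mathlib


variable {ι : Type*} [DecidableEq ι]

/-- Monomial semantics: `m S` evaluates an assignment `a` to `∏ i ∈ S, a i`. -/
def m (S : Finset ι) : (ι → ZMod 2) → ZMod 2 :=
  fun a => ∏ i ∈ S, a i

/-- Power-set sum semantics: `F U` evaluates `a` to the sum over nonempty subsets `A ⊆ U`
of `∏ i ∈ A, a i`. -/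
def F (U : Finset ι) : (ι → ZMod 2) → ZMod 2 :=
  fun a => ∑ A ∈ U.powerset.erase ∅, ∏ i ∈ A, a i

lemma F_eq (U : Finset ι) (a : ι → ZMod 2) :
    F U a + 1 = ∑ A ∈ U.powerset, ∏ i ∈ A, a i := by
  have h : (∅ : Finset ι) ∈ U.powerset := Finset.empty_mem_powerset U
  rw [F, add_comm, ← Finset.prod_empty (f := fun i => a i)]
  exact Finset.add_sum_erase U.powerset (fun A => ∏ i ∈ A, a i) h

lemma F_insert (T : Finset ι) (v : ι) (hvT : v ∉ T) (a : ι → ZMod 2) :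
    F (T ∪ {v}) a = F T a + a v * F T a + a v := by
  have key : F (T ∪ {v}) a + 1 = (F T a + 1) + a v * (F T a + 1) := by
    rw [F_eq, F_eq, Finset.union_comm, ← Finset.insert_eq,
      Finset.sum_powerset_insert hvT, Finset.mul_sum]
    congr 1
    refine Finset.sum_congr rfl fun A hA => ?_
    rw [Finset.prod_insert (fun h => hvT (Finset.mem_powerset.mp hA h))]
  have := key
  ring_nf at this ⊢
  linear_combination this

theorem stmt9 (S T : Finset ι) (v : ι) (hvS : v ∉ S) (hvT : v ∉ T) :
    m S * F (T ∪ {v}) = m S * F T + m (S ∪ {v}) * F T + m (S ∪ {v}) := by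
  funext a
  have hm : m (S ∪ {v}) a = m S a * a v := by
    rw [m, m, Finset.union_comm, ← Finset.insert_eq, Finset.prod_insert hvS]
    ring
  show m S a * F (T ∪ {v}) a = m S a * F T a + m (S ∪ {v}) a * F T a + m (S ∪ {v}) a
  rw [F_insert T v hvT, hm]
  ring
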